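/- Let Q be a directed set that is the union of countably many ω₁-directed subsets (subsets in which every countable subset has an upper bound within that subset). Then for every nonprincipal ultrafilter U on ω such that the cardinal cf(⟨U, ⊇⟩) has uncountable cofinality, ⟨U, ⊇⟩ is not Tukey reducible to Q. -/

import Mathlib

open Cardinal

/-- A subset `S` of a quasiorder `⟨α, r⟩` is bounded if it has an upper bound. -/
def TBounded {α : Type*} (r : α → α → Prop) (S : Set α) : Prop :=
  ∃ b, ∀ x ∈ S, r x b

/-- A subset `C` of `⟨α, r⟩` is cofinal if every element lies below a member of `C`. -/
def TCofinal {α : Type*} (r : α → α → Prop) (C : Set α) : Prop :=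
  ∀ x, ∃ c ∈ C, r x c

/-- A Tukey map: the image of every unbounded set is unbounded. -/
def IsTukeyMap {α β : Type*} (ra : α → α → Prop) (rb : β → β → Prop) (f : α → β) : Prop :=
  ∀ S : Set α, ¬ TBounded ra S → ¬ TBounded rb (f '' S)

/-- Tukey reducibility `P ≤_T Q`: there is a Tukey map from `P` to `Q`. -/
def TukeyLE {α β : Type*} (ra : α → α → Prop) (rb : β → β → Prop) : Prop :=
  ∃ f : α → β, IsTukeyMap ra rb f

/-- Tukey equivalence `P ≡_T Q`. -/
def TukeyEquiv {α β : Type*} (ra : α → α → Prop) (rb : β → β → Prop) : Prop :=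
  TukeyLE ra rb ∧ TukeyLE rb ra

/-- Strict Tukey reducibility `P <_T Q`. -/
def TukeyLT {α β : Type*} (ra : α → α → Prop) (rb : β → β → Prop) : Prop :=
  TukeyLE ra rb ∧ ¬ TukeyLE rb ra

/-- A directed set: a preorder in which every finite subset (in particular `∅` and pairs)
has an upper bound; equivalently, a nonempty directed preorder. -/
structure IsDirectedSet {α : Type*} (r : α → α → Prop) : Prop where
  nonempty : Nonempty α
  refl : ∀ x, r x x
  trans : ∀ {x y z}, r x y → r y z → r x z
  directed : ∀ x y, ∃ z, r x z ∧ r y z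

/-- The cofinality of a quasiorder: the least cardinality of a cofinal subset. -/
noncomputable def tCof {α : Type*} (r : α → α → Prop) : Cardinal :=
  sInf { c | ∃ C : Set α, TCofinal r C ∧ #C = c }

/-- `U` is a nonprincipal ultrafilter. -/
def Nonprincipal (U : Ultrafilter ℕ) : Prop := ∀ a : ℕ, U ≠ pure a

/-- `⟨U, ⊇⟩`: the members of `U` ordered by reverse inclusion (`A ≤ B` iff `A ⊇ B`). -/
def revIncl (U : Ultrafilter ℕ) : {A : Set ℕ // A ∈ U} → {A : Set ℕ // A ∈ U} → Prop :=
  fun A B => (B : Set ℕ) ⊆ (A : Set ℕ)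

/-- `⟨U, ⊇*⟩`: the members of `U` preordered by reverse almost inclusion
(`A ≤ B` iff `A ⊇* B` iff `B \\ A` is finite). -/
def revAlmostIncl (U : Ultrafilter ℕ) : {A : Set ℕ // A ∈ U} → {A : Set ℕ // A ∈ U} → Prop :=
  fun A B => ((B : Set ℕ) \ (A : Set ℕ)).Finite

/-- A subset of `⟨U,⊇⟩` all of whose countable subsets are bounded is itself bounded. -/
lemma sigma_bounded_of_countably_bounded (U : Ultrafilter ℕ)
    (X : Set {A : Set ℕ // A ∈ U})
    (hcnt : ∀ S ⊆ X, S.Countable → TBounded (revIncl U) S) :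
    TBounded (revIncl U) X := by
  by_contra hunb
  classical
  set α := (Cardinal.aleph 1).ord.ToType with hα
  -- recursion on the well-order α (of order type ω₁)
  set F : ∀ o : α, (∀ o' : α, o' < o → {A : Set ℕ // A ∈ U}) → {A : Set ℕ // A ∈ U} :=
    fun o ih =>
      if h : ∃ p ∈ X, ¬ ((⋂ o' : α, ⋂ h' : o' < o, (ih o' h').val) ⊆ p.val)
      then h.choose else ⟨Set.univ, Filter.univ_mem⟩ with hF
  set x : α → {A : Set ℕ // A ∈ U} := (wellFounded_lt (α := α)).fix F with hxdef
  have hx : ∀ o : α, x o = F o (fun o' _ => x o') := fun o =>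
    WellFounded.fix_eq _ F o
  set I : α → Set ℕ := fun o => ⋂ o' : α, ⋂ _ : o' < o, (x o').val with hI
  have inv : ∀ o : α, x o ∈ X ∧ ¬ (I o ⊆ (x o).val) := by
    intro o
    induction o using WellFoundedLT.induction with
    | ind o ih =>
      have hcount : (Set.Iio o).Countable :=
        (Cardinal.countable_iff_lt_aleph_one _).2 (Cardinal.mk_Iio_toType_ord_lt o)
      have hSsub : x '' (Set.Iio o) ⊆ X := by
        rintro _ ⟨o', ho', rfl⟩; exact (ih o' ho').1
      obtain ⟨b, hb⟩ := hcnt _ hSsub (hcount.image x)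
      have hbI : (b : Set ℕ) ⊆ I o := by
        apply Set.subset_iInter; intro o'
        apply Set.subset_iInter; intro ho'
        exact hb _ ⟨o', ho', rfl⟩
      have hIU : I o ∈ U := Filter.mem_of_superset b.2 hbI
      have hex : ∃ p ∈ X, ¬ (I o ⊆ p.val) := by
        by_contra h
        push_neg at h
        exact hunb ⟨⟨I o, hIU⟩, fun p hp => h p hp⟩
      have : x o = hex.choose := by rw [hx o]; simp only [hF]; exact dif_pos hex
      rw [this]
      exact ⟨hex.choose_spec.1, hex.choose_spec.2⟩
  -- pairwise disjoint nonempty differences give an injection of ω₁ into ℕ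
  have hne : ∀ o : α, (I o \ (x o).val).Nonempty := by
    intro o
    obtain ⟨a, ha, ha'⟩ := Set.not_subset.mp (inv o).2
    exact ⟨a, ha, ha'⟩
  set g : α → ℕ := fun o => (hne o).choose with hg
  have hginj : Function.Injective g := by
    intro o₁ o₂ he
    by_contra hne'
    have h1 : g o₁ ∈ I o₁ \ (x o₁).val := (hne o₁).choose_spec
    have h2 : g o₂ ∈ I o₂ \ (x o₂).val := (hne o₂).choose_spec
    rcases lt_or_gt_of_ne hne' with h | h
    · rw [he] at h1
      exact h1.2 (Set.mem_iInter.mp (Set.mem_iInter.mp h2.1 o₁) h)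
    · rw [← he] at h2
      exact h2.2 (Set.mem_iInter.mp (Set.mem_iInter.mp h1.1 o₂) h)
  have hle : #α ≤ ℵ₀ := by
    simpa using Cardinal.mk_le_of_injective hginj
  rw [hα, Cardinal.mk_toType, Cardinal.card_ord] at hle
  exact (Cardinal.aleph0_lt_aleph_one).not_ge hle

/-- If a directed set `Q` is a countable union of `ω₁`-directed subsets, then
`⟨U, ⊇⟩ ≰_T Q` for every nonprincipal ultrafilter `U` on `ω` such that the cardinal
`cf(⟨U, ⊇⟩)` has uncountable cofinality. -/
theorem stmt17 {Q : Type} (r : Q → Q → Prop) (hQ : IsDirectedSet r)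
    (Qn : ℕ → Set Q) (hcov : (⋃ n, Qn n) = Set.univ)
    (hdir : ∀ n, ∀ S ⊆ Qn n, S.Countable → ∃ b ∈ Qn n, ∀ x ∈ S, r x b) :
    ∀ U : Ultrafilter ℕ, Nonprincipal U →
      Cardinal.aleph0 < (tCof (revIncl U)).ord.cof →
      ¬ TukeyLE (revIncl U) r := by
  intro U _ hcf hT
  obtain ⟨f, hf⟩ := hT
  have haleph : ℵ₀ < tCof (revIncl U) :=
    lt_of_lt_of_le hcf (Ordinal.cof_ord_le _)
  -- each preimage of `Qn n` is bounded
  have hbdd : ∀ n : ℕ, TBounded (revIncl U) (f ⁻¹' (Qn n)) := by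
    intro n
    apply sigma_bounded_of_countably_bounded
    intro S hS hScnt
    have himg : TBounded r (f '' S) := by
      obtain ⟨b, _, hb⟩ := hdir n (f '' S)
        (by rintro _ ⟨p, hp, rfl⟩; exact hS hp) (hScnt.image f)
      exact ⟨b, hb⟩
    by_contra hS'
    exact hf S hS' himg
  choose b hb using hbdd
  -- the countably many bounds form a cofinal set
  have hcof : TCofinal (revIncl U) (Set.range b) := by
    intro A
    have : f A ∈ ⋃ n, Qn n := by rw [hcov]; trivial
    obtain ⟨n, hn⟩ := Set.mem_iUnion.mp this
    exact ⟨b n, ⟨n, rfl⟩, hb n A hn⟩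
  have hle : tCof (revIncl U) ≤ ℵ₀ := by
    refine le_trans (csInf_le' ⟨Set.range b, hcof, rfl⟩) ?_
    exact le_trans Cardinal.mk_range_le (by simp)
  exact haleph.not_ge hle
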